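/- arXiv:0903.3766 — 4 statements merged into one kernel-verified Lean document; each statement's English description precedes it below -/
import Mathlib

section
/- Let A = ⊕_{j∈ℕ} A_j be an ℕ-graded ring that is a domain with invariant basis number, and suppose A is faithfully flat as a left A₀-module. If K is a right ideal of A₀ that is stably free but not free as a right A₀-module, then the induced right ideal KA of A (equivalently K ⊗_{A₀} A) is stably free but not free as a right A-module. -/
/-- A finitely generated module `M` over `R` is *stably free* if
`M ⊕ Rⁿ ≅ Rᵐ` for some nonnegative integers `n`, `m`. -/
def IsStablyFree (R : Type*) [Ring R] (M : Type*) [AddCommGroup M] [Module R M] : Prop :=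
  ∃ n m : ℕ, Nonempty ((M × (Fin n → R)) ≃ₗ[R] (Fin m → R))

/-- Flatness of a left `R`-module over a (possibly noncommutative) ring,
expressed by the standard equational criterion: every linear relation
`∑ rᵢ • xᵢ = 0` is a consequence of linear relations in `R` itself. -/
def IsFlatLeft (R M : Type*) [Ring R] [AddCommGroup M] [Module R M] : Prop :=
  ∀ (n : ℕ) (r : Fin n → R) (x : Fin n → M), ∑ i, r i • x i = 0 →
    ∃ (m : ℕ) (a : Fin n → Fin m → R) (y : Fin m → M),
      (∀ i, x i = ∑ j, a i j • y j) ∧ ∀ j, ∑ i, r i * a i j = 0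

/-- Faithful flatness of a left `R`-module over a (possibly noncommutative) ring:
`M` is flat and `I·M ≠ M` for every proper right ideal `I` of `R`
(equivalently, `- ⊗_R M` is exact and kills no nonzero right module). -/
def IsFaithfullyFlatLeft (R M : Type*) [Ring R] [AddCommGroup M] [Module R M] : Prop :=
  IsFlatLeft R M ∧
    ∀ I : Submodule Rᵐᵒᵖ R, I ≠ ⊤ →
      AddSubgroup.closure {x : M | ∃ r ∈ I, ∃ m : M, r • m = x} ≠ ⊤


open MulOpposite

section Aug
variable {A : Type*} [Ring A] (𝒜 : ℕ → AddSubgroup A) [GradedRing 𝒜]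

/-- degree-zero projection -/
private noncomputable def aug : A →+ A :=
  AddMonoidHom.mk' (fun x => ↑((DirectSum.decompose 𝒜 x) 0)) (by
    intro x y; simp)

private lemma aug_of_mem {x : A} (hx : x ∈ 𝒜 0) : aug 𝒜 x = x :=
  DirectSum.decompose_of_mem_same 𝒜 hx

private lemma aug_mem (x : A) : aug 𝒜 x ∈ 𝒜 0 := SetLike.coe_mem _

private lemma aug_of_mem_ne {x : A} {i : ℕ} (hx : x ∈ 𝒜 i) (hi : i ≠ 0) : aug 𝒜 x = 0 :=
  DirectSum.decompose_of_mem_ne 𝒜 hx hi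

private lemma aug_one : aug 𝒜 1 = 1 := aug_of_mem 𝒜 (SetLike.one_mem_graded 𝒜)

private lemma aug_zero_mul {x : A} (hx : aug 𝒜 x = 0) (y : A) : aug 𝒜 (x * y) = 0 := by
  classical
  have hxs := DirectSum.sum_support_decompose 𝒜 x
  have hys := DirectSum.sum_support_decompose 𝒜 y
  calc aug 𝒜 (x * y)
      = aug 𝒜 ((∑ i ∈ DFinsupp.support ((DirectSum.decompose 𝒜) x), ↑(((DirectSum.decompose 𝒜) x) i)) *
          (∑ j ∈ DFinsupp.support ((DirectSum.decompose 𝒜) y), ↑(((DirectSum.decompose 𝒜) y) j))) := by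
        rw [hxs, hys]
    _ = 0 := by
        rw [Finset.sum_mul_sum]
        rw [map_sum]
        refine Finset.sum_eq_zero (fun i hi => ?_)
        rw [map_sum]
        refine Finset.sum_eq_zero (fun j hj => ?_)
        rcases Nat.eq_zero_or_pos i with h0 | hpos
        · subst h0
          have : ((DirectSum.decompose 𝒜 x) 0 : A) = 0 := hx
          rw [this, zero_mul, map_zero]
        · exact aug_of_mem_ne 𝒜 (SetLike.mul_mem_graded (SetLike.coe_mem _) (SetLike.coe_mem _))
            (by omega)

private lemma aug_mul_zero (x : A) {y : A} (hy : aug 𝒜 y = 0) : aug 𝒜 (x * y) = 0 := by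
  classical
  have hxs := DirectSum.sum_support_decompose 𝒜 x
  have hys := DirectSum.sum_support_decompose 𝒜 y
  calc aug 𝒜 (x * y)
      = aug 𝒜 ((∑ i ∈ DFinsupp.support ((DirectSum.decompose 𝒜) x), ↑(((DirectSum.decompose 𝒜) x) i)) *
          (∑ j ∈ DFinsupp.support ((DirectSum.decompose 𝒜) y), ↑(((DirectSum.decompose 𝒜) y) j))) := by
        rw [hxs, hys]
    _ = 0 := by
        rw [Finset.sum_mul_sum]
        rw [map_sum]
        refine Finset.sum_eq_zero (fun i hi => ?_)
        rw [map_sum]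
        refine Finset.sum_eq_zero (fun j hj => ?_)
        rcases Nat.eq_zero_or_pos j with h0 | hpos
        · subst h0
          have : ((DirectSum.decompose 𝒜 y) 0 : A) = 0 := hy
          rw [this, mul_zero, map_zero]
        · exact aug_of_mem_ne 𝒜 (SetLike.mul_mem_graded (SetLike.coe_mem _) (SetLike.coe_mem _))
            (by omega)

private lemma aug_idem (x : A) : aug 𝒜 (aug 𝒜 x) = aug 𝒜 x := aug_of_mem 𝒜 (aug_mem 𝒜 x)

private lemma aug_mul (x y : A) : aug 𝒜 (x * y) = aug 𝒜 x * aug 𝒜 y := by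
  have hx : x = aug 𝒜 x + (x - aug 𝒜 x) := by abel
  have hy : y = aug 𝒜 y + (y - aug 𝒜 y) := by abel
  have hx0 : aug 𝒜 (x - aug 𝒜 x) = 0 := by rw [map_sub, aug_idem, sub_self]
  have hy0 : aug 𝒜 (y - aug 𝒜 y) = 0 := by rw [map_sub, aug_idem, sub_self]
  calc aug 𝒜 (x * y) = aug 𝒜 ((aug 𝒜 x + (x - aug 𝒜 x)) * (aug 𝒜 y + (y - aug 𝒜 y))) := by
        rw [← hx, ← hy]
    _ = aug 𝒜 (aug 𝒜 x * aug 𝒜 y) + aug 𝒜 (aug 𝒜 x * (y - aug 𝒜 y))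
        + aug 𝒜 ((x - aug 𝒜 x) * aug 𝒜 y) + aug 𝒜 ((x - aug 𝒜 x) * (y - aug 𝒜 y)) := by
        rw [add_mul, mul_add, mul_add, map_add, map_add, map_add]; abel
    _ = aug 𝒜 x * aug 𝒜 y := by
        rw [aug_mul_zero 𝒜 _ hy0, aug_zero_mul 𝒜 hx0, aug_zero_mul 𝒜 hx0,
          aug_of_mem 𝒜 (SetLike.mul_mem_graded (aug_mem 𝒜 x) (aug_mem 𝒜 y))]
        abel

end Aug


section Descent

variable {A : Type*} [Ring A] {A₀ : Subring A} (π : A →+ A)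
  (K : Submodule A₀ᵐᵒᵖ A₀)

private lemma mem_P (k : K) :
    ((k : A₀) : A) ∈ Submodule.span Aᵐᵒᵖ (Subtype.val '' (K : Set A₀)) :=
  Submodule.subset_span ⟨(k : A₀), k.2, rfl⟩

private lemma aug_mem_K
    (hmul : ∀ x y : A, π (x * y) = π x * π y)
    (hcoe : ∀ a : A₀, π a = a)
    (hmem : ∀ x : A, π x ∈ A₀) :
    ∀ x ∈ Submodule.span Aᵐᵒᵖ (Subtype.val '' (K : Set A₀)),
      ∃ k : K, ((k : A₀) : A) = π x := by
  intro x hx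
  induction hx using Submodule.span_induction with
  | mem x h =>
      obtain ⟨a, ha, rfl⟩ := h
      exact ⟨⟨a, ha⟩, (hcoe a).symm⟩
  | zero => exact ⟨0, by simp⟩
  | add x y hx hy ihx ihy =>
      obtain ⟨k1, hk1⟩ := ihx; obtain ⟨k2, hk2⟩ := ihy
      exact ⟨k1 + k2, by push_cast; rw [hk1, hk2, map_add]⟩
  | smul c x hx ih =>
      obtain ⟨k, hk⟩ := ih
      refine ⟨op (⟨π (unop c), hmem _⟩ : A₀) • k, ?_⟩
      have h1 : c • x = x * unop c := rfl
      have h2 : ((op (⟨π (unop c), hmem _⟩ : A₀) • k : K) : A₀) =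
          (k : A₀) * ⟨π (unop c), hmem _⟩ := rfl
      rw [h1, hmul, ← hk, h2]
      push_cast
      rfl

end Descent

section Descent2

variable {A : Type*} [Ring A] {A₀ : Subring A} {π : A →+ A}
  {K : Submodule A₀ᵐᵒᵖ A₀}

private lemma repr_aug_zero
    (hmul : ∀ x y : A, π (x * y) = π x * π y)
    (hcoe : ∀ a : A₀, π a = a)
    (hmem : ∀ x : A, π x ∈ A₀)
    {ι : Type*} (b : Module.Basis ι Aᵐᵒᵖ (Submodule.span Aᵐᵒᵖ (Subtype.val '' (K : Set A₀))))
    (z : Submodule.span Aᵐᵒᵖ (Subtype.val '' (K : Set A₀)))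
    (hz : π (z : A) = 0) (j : ι) : π (unop (b.repr z j)) = 0 := by
  classical
  have hidem : ∀ x : A, π (π x) = π x := fun x => hcoe ⟨π x, hmem x⟩
  obtain ⟨n, f, g, hsum⟩ := Submodule.mem_span_set'.mp z.2
  -- the coe of each generator is fixed by π
  have hg : ∀ i : Fin n, π ((g i : A)) = (g i : A) := by
    intro i
    obtain ⟨a, _, ha⟩ := (g i).2
    rw [← ha]; exact hcoe a
  set c : Fin n → A := fun i => unop (f i) - π (unop (f i)) with hc
  have hcz : ∀ i, π (c i) = 0 := by
    intro i; rw [hc]; simp only [map_sub, hidem, sub_self]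
  have hgmem : ∀ i : Fin n, ((g i : A)) ∈
      Submodule.span Aᵐᵒᵖ (Subtype.val '' (K : Set A₀)) :=
    fun i => Submodule.subset_span (g i).2
  set zP : Submodule.span Aᵐᵒᵖ (Subtype.val '' (K : Set A₀)) :=
    ∑ i, (op (c i)) • (⟨(g i : A), hgmem i⟩ :
      Submodule.span Aᵐᵒᵖ (Subtype.val '' (K : Set A₀))) with hzP
  have hπz : π (z : A) = ∑ i, (g i : A) * π (unop (f i)) := by
    rw [← hsum, map_sum]
    refine Finset.sum_congr rfl (fun i _ => ?_)
    have : f i • ((g i : A)) = (g i : A) * unop (f i) := rfl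
    rw [this, hmul, hg]
  have hzz : z = zP := by
    apply Subtype.ext
    have hval : (zP : A) = ∑ i, (g i : A) * c i := by
      rw [hzP]
      push_cast
      refine Finset.sum_congr rfl (fun i _ => rfl)
    rw [hval]
    have : ∀ i, (g i : A) * c i = f i • ((g i : A)) - (g i : A) * π (unop (f i)) := by
      intro i
      have : f i • ((g i : A)) = (g i : A) * unop (f i) := rfl
      rw [this, hc]; exact mul_sub _ _ _
    rw [Finset.sum_congr rfl (fun i _ => this i), Finset.sum_sub_distrib, hsum, ← hπz, hz,
      sub_zero]
  have hrepr : b.repr z = ∑ i, op (c i) • b.repr ⟨(g i : A), hgmem i⟩ := by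
    rw [hzz, hzP, map_sum]
    refine Finset.sum_congr rfl (fun i _ => ?_)
    rw [map_smul]
  rw [hrepr]
  have happ : (∑ i, op (c i) • b.repr ⟨(g i : A), hgmem i⟩) j
      = ∑ i, op (c i) • (b.repr ⟨(g i : A), hgmem i⟩ j) := by
    rw [Finset.sum_apply']
    refine Finset.sum_congr rfl (fun i _ => rfl)
  rw [happ]
  have hunop : unop (∑ i, op (c i) • (b.repr ⟨(g i : A), hgmem i⟩ j))
      = ∑ i, unop (b.repr ⟨(g i : A), hgmem i⟩ j) * c i := by
    have h1 : unop (∑ i, op (c i) • (b.repr ⟨(g i : A), hgmem i⟩ j))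
        = ∑ i, unop (op (c i) • (b.repr ⟨(g i : A), hgmem i⟩ j)) :=
      map_sum ((MulOpposite.opAddEquiv (α := A)).symm) _ _
    rw [h1]
    exact Finset.sum_congr rfl (fun i _ => rfl)
  rw [hunop, map_sum]
  refine Finset.sum_eq_zero (fun i _ => ?_)
  rw [hmul, hcz, mul_zero]

end Descent2

section Descent3

variable {A : Type*} [Ring A] {A₀ : Subring A} {π : A →+ A}
  {K : Submodule A₀ᵐᵒᵖ A₀}

private lemma K_free_of_P_free
    (hmul : ∀ x y : A, π (x * y) = π x * π y)
    (hcoe : ∀ a : A₀, π a = a)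
    (hmem : ∀ x : A, π x ∈ A₀)
    (hfree : Module.Free Aᵐᵒᵖ (Submodule.span Aᵐᵒᵖ (Subtype.val '' (K : Set A₀)))) :
    Module.Free A₀ᵐᵒᵖ K := by
  classical
  have hidem : ∀ x : A, π (π x) = π x := fun x => hcoe ⟨π x, hmem x⟩
  letI : Module.Free Aᵐᵒᵖ (Submodule.span Aᵐᵒᵖ (Subtype.val '' (K : Set A₀))) := hfree
  set ι := Module.Free.ChooseBasisIndex Aᵐᵒᵖ
    (Submodule.span Aᵐᵒᵖ (Subtype.val '' (K : Set A₀))) with hι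
  let b : Module.Basis ι Aᵐᵒᵖ (Submodule.span Aᵐᵒᵖ (Subtype.val '' (K : Set A₀))) :=
    Module.Free.chooseBasis _ _
  have hPmem : ∀ k : K, ((k : A₀) : A) ∈ Submodule.span Aᵐᵒᵖ (Subtype.val '' (K : Set A₀)) :=
    fun k => mem_P K k
  let emb : K → Submodule.span Aᵐᵒᵖ (Subtype.val '' (K : Set A₀)) :=
    fun k => ⟨((k : A₀) : A), hPmem k⟩
  have emb_add : ∀ k1 k2 : K, emb (k1 + k2) = emb k1 + emb k2 := by
    intro k1 k2; apply Subtype.ext; push_cast; rfl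
  have emb_smul : ∀ (c : A₀ᵐᵒᵖ) (k : K),
      emb (c • k) = (op (((unop c) : A₀) : A)) • emb k := by
    intro c k
    apply Subtype.ext
    show (((c • k : K) : A₀) : A) = (op (((unop c) : A₀) : A)) • ((k : A₀) : A)
    have h2 : ((c • k : K) : A₀) = (k : A₀) * (unop c) := rfl
    rw [h2]; push_cast; rfl
  -- coefficient map
  let f0 : Aᵐᵒᵖ → A₀ᵐᵒᵖ := fun c => op (⟨π (unop c), hmem _⟩ : A₀)
  have hf0 : f0 0 = 0 := by
    apply unop_injective; apply Subtype.ext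
    show π (unop (0 : Aᵐᵒᵖ)) = ((0:A₀) : A)
    simp
  have hf0add : ∀ x y : Aᵐᵒᵖ, f0 (x + y) = f0 x + f0 y := by
    intro x y
    apply unop_injective; apply Subtype.ext
    show π (unop (x + y)) = ((unop (f0 x) + unop (f0 y) : A₀) : A)
    push_cast
    rw [unop_add, map_add]
    rfl
  have hf0sub : ∀ x y : Aᵐᵒᵖ, f0 (x - y) = f0 x - f0 y := by
    intro x y
    apply unop_injective; apply Subtype.ext
    show π (unop (x - y)) = ((unop (f0 x) - unop (f0 y) : A₀) : A)
    push_cast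
    rw [unop_sub, map_sub]
    rfl
  have hf0smul : ∀ (c : A₀ᵐᵒᵖ) (d : Aᵐᵒᵖ), f0 ((op (((unop c) : A₀) : A)) * d) = c • f0 d := by
    intro c d
    apply unop_injective; apply Subtype.ext
    show π (unop d * ((unop c : A₀) : A)) = ((unop (c • f0 d) : A₀) : A)
    rw [hmul, hcoe]
    rfl
  have hf0zero : ∀ d : Aᵐᵒᵖ, π (unop d) = 0 → f0 d = 0 := by
    intro d hd
    apply unop_injective; apply Subtype.ext
    show π (unop d) = ((0:A₀) : A)
    rw [hd]; simp
  have hf0one : f0 1 = 1 := by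
    apply unop_injective; apply Subtype.ext
    show π (unop (1:Aᵐᵒᵖ)) = ((1:A₀) : A)
    rw [unop_one]
    simpa using hcoe 1
  -- the map G
  let G : K →ₗ[A₀ᵐᵒᵖ] (ι →₀ A₀ᵐᵒᵖ) :=
  { toFun := fun k => Finsupp.mapRange f0 hf0 (b.repr (emb k))
    map_add' := by
      intro k1 k2
      show Finsupp.mapRange f0 hf0 (b.repr (emb (k1 + k2))) = _
      rw [emb_add, map_add]
      exact Finsupp.mapRange_add hf0add _ _
    map_smul' := by
      intro c k
      show Finsupp.mapRange f0 hf0 (b.repr (emb (c • k))) = _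
      rw [emb_smul, map_smul]
      ext j
      have h3 : (op (((unop c) : A₀) : A)) • (b.repr (emb k) j)
          = (op (((unop c) : A₀) : A)) * (b.repr (emb k) j) := rfl
      rw [RingHom.id_apply, Finsupp.smul_apply, Finsupp.mapRange_apply, Finsupp.mapRange_apply,
        Finsupp.smul_apply, h3, hf0smul] }
  -- injectivity
  have hGinj : Function.Injective G := by
    rw [injective_iff_map_eq_zero]
    intro k hk
    have hcoeff : ∀ j, π (unop (b.repr (emb k) j)) = 0 := by
      intro j
      have h5' : Finsupp.mapRange f0 hf0 (b.repr (emb k)) = 0 := hk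
      have h5 : f0 (b.repr (emb k) j) = 0 := by
        have := DFunLike.congr_fun h5' j
        rwa [Finsupp.mapRange_apply] at this
      have h6' := congrArg (fun t : A₀ᵐᵒᵖ => ((unop t : A₀) : A)) h5
      simp only [unop_zero, ZeroMemClass.coe_zero] at h6'
      exact h6'
    have h7 : π ((emb k : A)) = 0 := by
      have h8 := b.linearCombination_repr (emb k)
      have h9 : ((emb k : A)) = (((Finsupp.linearCombination Aᵐᵒᵖ b) (b.repr (emb k))) : A) := by
        rw [h8]
      rw [h9, Finsupp.linearCombination_apply]
      rw [Finsupp.sum]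
      have h10 : ((∑ j ∈ (b.repr (emb k)).support, (b.repr (emb k)) j • b j :
          Submodule.span Aᵐᵒᵖ (Subtype.val '' (K : Set A₀))) : A)
          = ∑ j ∈ (b.repr (emb k)).support, ((b j : A) * unop ((b.repr (emb k)) j)) := by
        push_cast
        exact Finset.sum_congr rfl (fun j _ => rfl)
      rw [h10, map_sum]
      refine Finset.sum_eq_zero (fun j _ => ?_)
      rw [hmul, hcoeff j, mul_zero]
    have h11 : ((k : A₀) : A) = 0 := by
      have := hcoe (k : A₀)
      rw [← this]
      exact h7
    apply Subtype.ext
    exact Subtype.ext h11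
  -- surjectivity
  have hGsingle : ∀ i : ι, Finsupp.single i (1 : A₀ᵐᵒᵖ) ∈ LinearMap.range G := by
    intro i
    obtain ⟨κ, hκ⟩ := aug_mem_K π K hmul hcoe hmem ((b i : A)) (b i).2
    refine ⟨κ, ?_⟩
    have hz : π (((b i - emb κ : Submodule.span Aᵐᵒᵖ (Subtype.val '' (K : Set A₀))) : A)) = 0 := by
      push_cast
      rw [map_sub, show π (((κ : A₀) : A)) = ((κ : A₀) : A) from hcoe _, hκ, sub_self]
    have hcz := fun j => repr_aug_zero hmul hcoe hmem b (b i - emb κ) hz j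
    show Finsupp.mapRange f0 hf0 (b.repr (emb κ)) = Finsupp.single i 1
    have hre : b.repr (emb κ) = Finsupp.single i 1 - b.repr (b i - emb κ) := by
      rw [map_sub, b.repr_self i]
      abel
    rw [hre, Finsupp.mapRange_sub hf0sub, Finsupp.mapRange_single, hf0one]
    have hzero : Finsupp.mapRange f0 hf0 (b.repr (b i - emb κ)) = 0 := by
      ext j
      rw [Finsupp.mapRange_apply, hf0zero _ (hcz j)]
      rfl
    rw [hzero, sub_zero]
  have hGsurj : Function.Surjective G := by
    intro F
    have hmemF : F ∈ LinearMap.range G := by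
      have hFsum : F = F.sum (fun j c => c • Finsupp.single j (1 : A₀ᵐᵒᵖ)) := by
        conv_lhs => rw [← Finsupp.sum_single F]
        refine Finsupp.sum_congr (fun j _ => ?_)
        rw [Finsupp.smul_single, smul_eq_mul, mul_one]
      rw [hFsum, Finsupp.sum]
      exact Submodule.sum_mem _ (fun j _ => Submodule.smul_mem _ _ (hGsingle j))
    exact hmemF
  exact Module.Free.of_equiv (LinearEquiv.ofBijective G ⟨hGinj, hGsurj⟩).symm

end Descent3

section Ext

variable {A : Type*} [Ring A] {A₀ : Subring A}

private lemma genPi {S : Type*} [Semiring S] {a : ℕ} (v : Fin a → S) :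
    v = ∑ i, v i • (Pi.single i (1 : S) : Fin a → S) := by
  classical
  funext x
  rw [Finset.sum_apply]
  have h : ∀ i, (v i • (Pi.single i (1:S) : Fin a → S)) x = v i * (Pi.single i (1:S) : Fin a → S) x := fun i => rfl
  rw [Finset.sum_congr rfl (fun i _ => h i)]
  have h2 : ∀ i, v i * (Pi.single i (1:S) : Fin a → S) x = v i * (if x = i then 1 else 0) := by
    intro i; rw [Pi.single_apply]
  rw [Finset.sum_congr rfl (fun i _ => h2 i)]
  simp

/-- inclusion `A₀ᵐᵒᵖ →+* Aᵐᵒᵖ` -/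
private def cA (A₀ : Subring A) : A₀ᵐᵒᵖ →+* Aᵐᵒᵖ where
  toFun c := op ((unop c : A₀) : A)
  map_one' := rfl
  map_mul' c d := by
    apply unop_injective
    show ((((unop d) * (unop c) : A₀) : A)) = (unop d : A₀) * (unop c : A₀)
    push_cast
    rfl
  map_zero' := by
    apply unop_injective
    show (((0 : A₀)) : A) = 0
    push_cast
    rfl
  map_add' c d := by
    apply unop_injective
    show ((((unop c) + (unop d) : A₀) : A)) = ((unop c : A₀) : A) + ((unop d : A₀) : A)
    push_cast
    rfl

private lemma cA_inj : Function.Injective (cA A₀) := by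
  intro c d h
  apply unop_injective
  apply Subtype.ext
  exact congrArg unop h


private lemma op_sum {S : Type*} [AddCommMonoid S] {ι : Type*} (s : Finset ι) (g : ι → S) :
    op (∑ i ∈ s, g i) = ∑ i ∈ s, op (g i) :=
  map_sum (opAddEquiv (α := S)) g s

private lemma unop_sum {S : Type*} [AddCommMonoid S] {ι : Type*} (s : Finset ι) (g : ι → Sᵐᵒᵖ) :
    unop (∑ i ∈ s, g i) = ∑ i ∈ s, unop (g i) :=
  map_sum ((opAddEquiv (α := S)).symm) g s

private def extMap {a b : ℕ} (φ : (Fin a → A₀ᵐᵒᵖ) →ₗ[A₀ᵐᵒᵖ] (Fin b → A₀ᵐᵒᵖ)) :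
    (Fin a → Aᵐᵒᵖ) →ₗ[Aᵐᵒᵖ] (Fin b → Aᵐᵒᵖ) where
  toFun v := fun j => ∑ i, v i * cA A₀ (φ (Pi.single i 1) j)
  map_add' u v := by
    funext j
    simp only [Pi.add_apply, add_mul, Finset.sum_add_distrib]
  map_smul' c v := by
    funext j
    show ∑ i, (c * v i) * cA A₀ (φ (Pi.single i 1) j)
      = c * ∑ i, v i * cA A₀ (φ (Pi.single i 1) j)
    rw [Finset.mul_sum]
    exact Finset.sum_congr rfl fun i _ => mul_assoc _ _ _

private lemma extMap_apply {a b : ℕ} (φ : (Fin a → A₀ᵐᵒᵖ) →ₗ[A₀ᵐᵒᵖ] (Fin b → A₀ᵐᵒᵖ))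
    (v : Fin a → Aᵐᵒᵖ) (j : Fin b) :
    extMap φ v j = ∑ i, v i * cA A₀ (φ (Pi.single i 1) j) := rfl

private lemma extMap_coe {a b : ℕ} (φ : (Fin a → A₀ᵐᵒᵖ) →ₗ[A₀ᵐᵒᵖ] (Fin b → A₀ᵐᵒᵖ))
    (u : Fin a → A₀ᵐᵒᵖ) :
    extMap φ (fun x => cA A₀ (u x)) = fun j => cA A₀ (φ u j) := by
  classical
  funext j
  rw [extMap_apply]
  have h1 : ∀ i, cA A₀ (u i) * cA A₀ (φ (Pi.single i 1) j)
      = cA A₀ (u i * φ (Pi.single i 1) j) := fun i => (map_mul _ _ _).symm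
  rw [Finset.sum_congr rfl (fun i _ => h1 i), ← map_sum]
  congr 1
  conv_rhs => rw [genPi u]
  rw [map_sum, Finset.sum_apply]
  refine Finset.sum_congr rfl (fun i _ => ?_)
  rw [map_smul]
  rfl

private lemma extMap_comp {a b c : ℕ} (φ : (Fin a → A₀ᵐᵒᵖ) →ₗ[A₀ᵐᵒᵖ] (Fin b → A₀ᵐᵒᵖ))
    (ψ : (Fin b → A₀ᵐᵒᵖ) →ₗ[A₀ᵐᵒᵖ] (Fin c → A₀ᵐᵒᵖ)) (v : Fin a → Aᵐᵒᵖ) :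
    extMap (ψ ∘ₗ φ) v = extMap ψ (extMap φ v) := by
  classical
  conv_lhs => rw [genPi v]
  conv_rhs => rw [genPi v]
  rw [map_sum, map_sum, map_sum]
  refine Finset.sum_congr rfl (fun i _ => ?_)
  rw [map_smul, map_smul, map_smul]
  congr 1
  have hsingle : (Pi.single i (1 : Aᵐᵒᵖ) : Fin a → Aᵐᵒᵖ)
      = fun x => cA A₀ ((Pi.single i (1:A₀ᵐᵒᵖ) : Fin a → A₀ᵐᵒᵖ) x) := by
    funext x
    rw [Pi.single_apply, Pi.single_apply, apply_ite (cA A₀)]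
    rw [map_one, map_zero]
  rw [hsingle, extMap_coe, extMap_coe, extMap_coe]
  rfl

private lemma extMap_id {a : ℕ} (v : Fin a → Aᵐᵒᵖ) :
    extMap (LinearMap.id : (Fin a → A₀ᵐᵒᵖ) →ₗ[A₀ᵐᵒᵖ] (Fin a → A₀ᵐᵒᵖ)) v = v := by
  classical
  conv_lhs => rw [genPi v]
  conv_rhs => rw [genPi v]
  rw [map_sum]
  refine Finset.sum_congr rfl (fun i _ => ?_)
  rw [map_smul]
  congr 1
  have hsingle : (Pi.single i (1 : Aᵐᵒᵖ) : Fin a → Aᵐᵒᵖ)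
      = fun x => cA A₀ ((Pi.single i (1:A₀ᵐᵒᵖ) : Fin a → A₀ᵐᵒᵖ) x) := by
    funext x
    rw [Pi.single_apply, Pi.single_apply, apply_ite (cA A₀)]
    rw [map_one, map_zero]
  rw [hsingle, extMap_coe]
  rfl

private lemma extMap_add {a b : ℕ} (φ ψ : (Fin a → A₀ᵐᵒᵖ) →ₗ[A₀ᵐᵒᵖ] (Fin b → A₀ᵐᵒᵖ))
    (v : Fin a → Aᵐᵒᵖ) :
    extMap (φ + ψ) v = extMap φ v + extMap ψ v := by
  funext j
  rw [extMap_apply]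
  have h : ∀ i, v i * cA A₀ ((φ + ψ) (Pi.single i 1) j)
      = v i * cA A₀ (φ (Pi.single i 1) j) + v i * cA A₀ (ψ (Pi.single i 1) j) := by
    intro i
    rw [LinearMap.add_apply, Pi.add_apply, map_add, mul_add]
  rw [Finset.sum_congr rfl (fun i _ => h i), Finset.sum_add_distrib]
  rfl

private lemma extMap_zero {a b : ℕ} (v : Fin a → Aᵐᵒᵖ) :
    extMap (0 : (Fin a → A₀ᵐᵒᵖ) →ₗ[A₀ᵐᵒᵖ] (Fin b → A₀ᵐᵒᵖ)) v = 0 := by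
  funext j
  rw [extMap_apply]
  refine Finset.sum_eq_zero (fun i _ => ?_)
  rw [LinearMap.zero_apply, Pi.zero_apply, map_zero, mul_zero]

end Ext

section StablyFree

variable {A : Type*} [Ring A] {A₀ : Subring A}

private lemma P_stablyFree (hflat : IsFlatLeft A₀ A) (K : Submodule A₀ᵐᵒᵖ A₀)
    (hsf : IsStablyFree A₀ᵐᵒᵖ K) :
    IsStablyFree Aᵐᵒᵖ (Submodule.span Aᵐᵒᵖ (Subtype.val '' (K : Set A₀))) := by
  classical
  obtain ⟨n, m, ⟨θ⟩⟩ := hsf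
  refine ⟨n, m, ?_⟩
  let opL : A₀ ≃ₗ[A₀ᵐᵒᵖ] A₀ᵐᵒᵖ := MulOpposite.opLinearEquiv A₀ᵐᵒᵖ
  -- the A₀ᵐᵒᵖ-linear maps
  let pmap : (Fin m → A₀ᵐᵒᵖ) →ₗ[A₀ᵐᵒᵖ] (Fin 1 → A₀ᵐᵒᵖ) :=
    (LinearMap.pi fun _ : Fin 1 => LinearMap.id) ∘ₗ opL.toLinearMap ∘ₗ K.subtype ∘ₗ
      (LinearMap.fst A₀ᵐᵒᵖ K (Fin n → A₀ᵐᵒᵖ)) ∘ₗ θ.symm.toLinearMap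
  let Qmap : (Fin m → A₀ᵐᵒᵖ) →ₗ[A₀ᵐᵒᵖ] (Fin n → A₀ᵐᵒᵖ) :=
    (LinearMap.snd A₀ᵐᵒᵖ K (Fin n → A₀ᵐᵒᵖ)) ∘ₗ θ.symm.toLinearMap
  let Tmap : (Fin n → A₀ᵐᵒᵖ) →ₗ[A₀ᵐᵒᵖ] (Fin m → A₀ᵐᵒᵖ) :=
    θ.toLinearMap ∘ₗ (LinearMap.inr A₀ᵐᵒᵖ K (Fin n → A₀ᵐᵒᵖ))
  let Emap : (Fin m → A₀ᵐᵒᵖ) →ₗ[A₀ᵐᵒᵖ] (Fin m → A₀ᵐᵒᵖ) :=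
    θ.toLinearMap ∘ₗ (LinearMap.inl A₀ᵐᵒᵖ K (Fin n → A₀ᵐᵒᵖ)) ∘ₗ
      (LinearMap.fst A₀ᵐᵒᵖ K (Fin n → A₀ᵐᵒᵖ)) ∘ₗ θ.symm.toLinearMap
  have hpmap : ∀ c : Fin m → A₀ᵐᵒᵖ,
      pmap c = fun _ => op (((θ.symm c).1 : K) : A₀) := fun c => rfl
  have hQmap : ∀ c : Fin m → A₀ᵐᵒᵖ, Qmap c = (θ.symm c).2 := fun c => rfl
  have hTmap : ∀ y : Fin n → A₀ᵐᵒᵖ, Tmap y = θ (0, y) := fun y => rfl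
  have hEmap : ∀ c : Fin m → A₀ᵐᵒᵖ, Emap c = θ ((θ.symm c).1, 0) := fun c => rfl
  -- identities
  have hPT : pmap ∘ₗ Tmap = 0 := by
    apply LinearMap.ext; intro y
    rw [LinearMap.comp_apply, hTmap, hpmap, LinearMap.zero_apply]
    funext z
    rw [LinearEquiv.symm_apply_apply]
    show op (((0 : K) : A₀)) = 0
    rw [ZeroMemClass.coe_zero, op_zero]
  have hQT : Qmap ∘ₗ Tmap = LinearMap.id := by
    apply LinearMap.ext; intro y
    rw [LinearMap.comp_apply, hTmap, hQmap, LinearEquiv.symm_apply_apply, LinearMap.id_apply]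
  have hET : Emap + Tmap ∘ₗ Qmap = LinearMap.id := by
    apply LinearMap.ext; intro c
    show Emap c + Tmap (Qmap c) = c
    rw [hEmap, hTmap, hQmap, ← map_add]
    have h : ((θ.symm c).1, (0 : Fin n → A₀ᵐᵒᵖ)) + ((0 : K), (θ.symm c).2) = θ.symm c := by
      apply Prod.ext <;> simp
    rw [h, LinearEquiv.apply_symm_apply]
  have hE0 : ∀ c : Fin m → A₀ᵐᵒᵖ, pmap c = 0 → Emap c = 0 := by
    intro c hc
    have h1 : op (((θ.symm c).1 : K) : A₀) = (0 : A₀ᵐᵒᵖ) := by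
      have := congrFun ((hpmap c).symm.trans hc) 0
      exact this
    have h2 : (θ.symm c).1 = 0 := by
      have h3 : (((θ.symm c).1 : K) : A₀) = 0 := by
        have h4 := congrArg unop h1
        simpa using h4
      exact (ZeroMemClass.coe_eq_zero).mp h3
    rw [hEmap, h2]
    have h4 : ((0 : K), (0 : Fin n → A₀ᵐᵒᵖ)) = (0 : K × (Fin n → A₀ᵐᵒᵖ)) := rfl
    rw [h4, map_zero]
  -- the evaluation map into A
  let unopL : (Fin 1 → Aᵐᵒᵖ) →ₗ[Aᵐᵒᵖ] A :=
  { toFun := fun v => unop (v 0)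
    map_add' := fun u v => rfl
    map_smul' := fun c v => rfl }
  let f : (Fin m → Aᵐᵒᵖ) →ₗ[Aᵐᵒᵖ] A := unopL ∘ₗ extMap pmap
  have hfapply : ∀ v : Fin m → Aᵐᵒᵖ,
      f v = ∑ i, ((((θ.symm (Pi.single i 1)).1 : K) : A₀) : A) * unop (v i) := by
    intro v
    have h0 : f v = unop (∑ i, v i * cA A₀ (pmap (Pi.single i 1) 0)) := rfl
    rw [h0, unop_sum]
    refine Finset.sum_congr rfl (fun i _ => ?_)
    rfl
  have hfP : ∀ v : Fin m → Aᵐᵒᵖ,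
      f v ∈ Submodule.span Aᵐᵒᵖ (Subtype.val '' (K : Set A₀)) := by
    intro v
    rw [hfapply]
    refine Submodule.sum_mem _ (fun i _ => ?_)
    have h3 : ((((θ.symm (Pi.single i 1)).1 : K) : A₀) : A) * unop (v i)
        = op (unop (v i)) • ((((θ.symm (Pi.single i 1)).1 : K) : A₀) : A) := rfl
    rw [h3]
    exact Submodule.smul_mem _ _ (mem_P K _)
  let B : (Fin m → Aᵐᵒᵖ) →ₗ[Aᵐᵒᵖ]
      ((Submodule.span Aᵐᵒᵖ (Subtype.val '' (K : Set A₀))) × (Fin n → Aᵐᵒᵖ)) :=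
    LinearMap.prod (LinearMap.codRestrict _ f hfP) (extMap Qmap)
  -- injectivity
  have hinj : Function.Injective B := by
    rw [injective_iff_map_eq_zero]
    intro v hv
    have hv1 : f v = 0 := by
      have h1' := congrArg Prod.fst hv
      have h2' := congrArg Subtype.val h1'
      exact h2'
    have hv2 : extMap Qmap v = 0 := congrArg Prod.snd hv
    have hvE : v = extMap Emap v := by
      calc v = extMap (A₀ := A₀) LinearMap.id v := (extMap_id v).symm
        _ = extMap (Emap + Tmap ∘ₗ Qmap) v := by rw [hET]
        _ = extMap Emap v + extMap Tmap (extMap Qmap v) := by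
            rw [extMap_add, extMap_comp]
        _ = extMap Emap v := by rw [hv2, map_zero, add_zero]
    set w : Fin m → A₀ := fun i => (((θ.symm (Pi.single i 1)).1 : K) : A₀) with hw
    have hrel : ∑ i, w i • unop (v i) = 0 := by
      rw [← hv1, hfapply]
      rfl
    obtain ⟨m', a, y, hxy, hr⟩ := hflat m w (fun i => unop (v i)) hrel
    have hcol : ∀ j, pmap (fun i => op (a i j)) = 0 := by
      intro j
      have h4 : (fun i => op (a i j)) = ∑ i, op (a i j) •
          (Pi.single i (1:A₀ᵐᵒᵖ) : Fin m → A₀ᵐᵒᵖ) := genPi _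
      funext z
      rw [h4, map_sum, Finset.sum_apply]
      have h5 : ∀ i, (pmap (op (a i j) • (Pi.single i (1:A₀ᵐᵒᵖ) : Fin m → A₀ᵐᵒᵖ))) z
          = op (w i * a i j) := by
        intro i
        rw [map_smul]
        show op (a i j) * (pmap (Pi.single i 1)) z = _
        rw [hpmap]
        show op (a i j) * op (w i) = op (w i * a i j)
        rfl
      rw [Finset.sum_congr rfl (fun i _ => h5 i), ← op_sum, hr j]
      rfl
    have hvsum : v = ∑ j, op (y j) • (fun i => cA A₀ (op (a i j))) := by
      funext i
      rw [Finset.sum_apply]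
      have h7 : ∀ j, (op (y j) • (fun i => cA A₀ (op (a i j)))) i
          = op (((a i j : A₀) : A) * y j) := fun j => rfl
      rw [Finset.sum_congr rfl (fun j _ => h7 j), ← op_sum]
      have h8 : ∑ j, ((a i j : A₀) : A) * y j = unop (v i) := by
        rw [hxy i]
        exact Finset.sum_congr rfl (fun j _ => rfl)
      rw [h8]
      rfl
    have hEv : extMap Emap v = 0 := by
      rw [hvsum, map_sum]
      refine Finset.sum_eq_zero (fun j _ => ?_)
      rw [map_smul]
      have h9 : extMap Emap (fun i => cA A₀ (op (a i j)))
          = fun z => cA A₀ (Emap (fun i => op (a i j)) z) := extMap_coe _ _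
      rw [h9, hE0 _ (hcol j)]
      funext z
      show op (y j) * cA A₀ ((0 : Fin m → A₀ᵐᵒᵖ) z) = (0 : Fin m → Aᵐᵒᵖ) z
      rw [show (0 : Fin m → A₀ᵐᵒᵖ) z = 0 from rfl, map_zero, mul_zero]
      rfl
    rw [hvE, hEv]
  -- surjectivity
  have hsur0 : ∀ yv : Fin n → Aᵐᵒᵖ, B (extMap Tmap yv) = (0, yv) := by
    intro yv
    have hfst : f (extMap Tmap yv) = 0 := by
      show unopL (extMap pmap (extMap Tmap yv)) = 0
      rw [← extMap_comp, hPT, extMap_zero]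
      show unop ((0 : Fin 1 → Aᵐᵒᵖ) 0) = 0
      rfl
    have hsnd : extMap Qmap (extMap Tmap yv) = yv := by
      rw [← extMap_comp, hQT, extMap_id]
    apply Prod.ext
    · apply Subtype.ext
      exact hfst
    · exact hsnd
  have hsur1 : ∀ (x : A) (hx : x ∈ Submodule.span Aᵐᵒᵖ (Subtype.val '' (K : Set A₀))),
      ((⟨x, hx⟩ : Submodule.span Aᵐᵒᵖ (Subtype.val '' (K : Set A₀))), (0 : Fin n → Aᵐᵒᵖ))
        ∈ LinearMap.range B := by
    intro x hx
    induction hx using Submodule.span_induction with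
    | mem x h =>
        obtain ⟨a0, ha0, rfl⟩ := h
        refine ⟨fun i => cA A₀ (θ (⟨a0, ha0⟩, 0) i), ?_⟩
        have hfst : f (fun i => cA A₀ (θ (⟨a0, ha0⟩, 0) i)) = a0 := by
          show unopL (extMap pmap (fun i => cA A₀ (θ (⟨a0, ha0⟩, 0) i))) = _
          rw [extMap_coe]
          show unop (cA A₀ (pmap (θ (⟨a0, ha0⟩, 0)) 0)) = (a0 : A)
          rw [hpmap]
          show ((((θ.symm (θ (⟨a0, ha0⟩, 0))).1 : K) : A₀) : A) = (a0 : A)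
          rw [LinearEquiv.symm_apply_apply]
        have hsnd : extMap Qmap (fun i => cA A₀ (θ (⟨a0, ha0⟩, 0) i)) = 0 := by
          rw [extMap_coe]
          have h10 : Qmap (θ (⟨a0, ha0⟩, 0)) = 0 := by
            rw [hQmap, LinearEquiv.symm_apply_apply]
          rw [h10]
          funext i
          show cA A₀ ((0 : Fin n → A₀ᵐᵒᵖ) i) = (0 : Fin n → Aᵐᵒᵖ) i
          rw [show (0 : Fin n → A₀ᵐᵒᵖ) i = 0 from rfl, map_zero]
          rfl
        apply Prod.ext
        · exact Subtype.ext hfst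
        · exact hsnd
    | zero =>
        refine ⟨0, ?_⟩
        rw [map_zero]
        apply Prod.ext
        · apply Subtype.ext; rfl
        · rfl
    | add x y hxm hym ihx ihy =>
        obtain ⟨v1, hv1⟩ := ihx
        obtain ⟨v2, hv2⟩ := ihy
        refine ⟨v1 + v2, ?_⟩
        rw [map_add, hv1, hv2]
        apply Prod.ext
        · apply Subtype.ext; push_cast; rfl
        · simp
    | smul c x hxm ih =>
        obtain ⟨v, hvv⟩ := ih
        refine ⟨c • v, ?_⟩
        rw [map_smul, hvv]
        apply Prod.ext
        · apply Subtype.ext; rfl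
        · simp
  have hsur : Function.Surjective B := by
    intro z
    have h8 : (z.1, (0 : Fin n → Aᵐᵒᵖ)) ∈ LinearMap.range B := by
      have := hsur1 (z.1 : A) z.1.2
      simpa using this
    obtain ⟨v1, hv1⟩ := h8
    refine ⟨v1 + extMap Tmap z.2, ?_⟩
    rw [map_add, hv1, hsur0]
    apply Prod.ext <;> simp
  exact ⟨(LinearEquiv.ofBijective B ⟨hinj, hsur⟩).symm⟩

end StablyFree

/-- Let `A = ⊕_{j∈ℕ} A_j` be an `ℕ`-graded ring which is a domain
with invariant basis number, faithfully flat as a left module over its degree-zero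
subring `A₀`.  If `K` is a right ideal of `A₀` which is stably free but not free as a
right `A₀`-module, then the induced right ideal `KA` of `A` is stably free but not
free as a right `A`-module. -/
theorem stablyFree_nonfree_lift_of_nat_graded
    {A : Type*} [Ring A] [IsDomain A] [InvariantBasisNumber A]
    (𝒜 : ℕ → AddSubgroup A) [GradedRing 𝒜]
    (A₀ : Subring A) [InvariantBasisNumber A₀] (hA₀ : (A₀ : Set A) = (𝒜 0 : Set A))
    (hff : IsFaithfullyFlatLeft A₀ A)
    (K : Submodule A₀ᵐᵒᵖ A₀)
    (hsf : IsStablyFree A₀ᵐᵒᵖ K) (hnf : ¬ Module.Free A₀ᵐᵒᵖ K) :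
    IsStablyFree Aᵐᵒᵖ (Submodule.span Aᵐᵒᵖ (Subtype.val '' (K : Set A₀))) ∧
      ¬ Module.Free Aᵐᵒᵖ (Submodule.span Aᵐᵒᵖ (Subtype.val '' (K : Set A₀))) := by
  constructor
  · exact P_stablyFree hff.1 K hsf
  · intro hfree
    have hset : ∀ x : A, x ∈ A₀ ↔ x ∈ 𝒜 0 := fun x => by
      constructor
      · intro h
        rw [← SetLike.mem_coe, ← hA₀]
        exact h
      · intro h
        rw [← SetLike.mem_coe, hA₀]
        exact h
    exact hnf (K_free_of_P_free (π := aug 𝒜) (aug_mul 𝒜)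
      (fun a => aug_of_mem 𝒜 ((hset _).mp a.2))
      (fun x => (hset _).mpr (aug_mem 𝒜 x)) hfree)
end

section
/- Let G be an ordered-like additive semigroup and let A = ⊕_{σ∈G} A_σ be a G-graded ring that is a graded domain (the product of two nonzero homogeneous elements is nonzero). Then A₀ is a completely prime subring of A: for any two nonzero elements a, b of A, if ab ∈ A₀ then a ∈ A₀ or b ∈ A₀. -/
open Pointwise

/-- An additive commutative semigroup with zero is *ordered-like* if `0` is its only
invertible element and for any two finite nonempty subsets `S₁`, `S₂` with
`S₁ + S₂ ≠ {0}` there is `c ∈ S₁ + S₂` with exactly one representation `c = a + b`,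
`a ∈ S₁`, `b ∈ S₂`. -/
def OrderedLike (G : Type*) [AddCommMonoid G] [DecidableEq G] : Prop :=
  (∀ a b : G, a + b = 0 → a = 0) ∧
    ∀ S₁ S₂ : Finset G, S₁.Nonempty → S₂.Nonempty → S₁ + S₂ ≠ ({0} : Finset G) →
      ∃ c ∈ S₁ + S₂, ∃! p : G × G, p.1 ∈ S₁ ∧ p.2 ∈ S₂ ∧ p.1 + p.2 = c

section Aux

variable {G : Type*} [AddCommMonoid G] [DecidableEq G]


lemma OrderedLike.zero_of_add_eq_zero (hG : OrderedLike G) {a b : G} (h : a + b = 0) :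
    a = 0 ∧ b = 0 :=
  ⟨hG.1 a b h, hG.1 b a (by rwa [add_comm])⟩

lemma OrderedLike.cancel (hG : OrderedLike G) {x y z : G} (h : x + z = y + z) : x = y := by
  by_contra hxy
  by_cases hs : x + z = 0
  · obtain ⟨hx, hz⟩ := hG.zero_of_add_eq_zero hs
    obtain ⟨hy, -⟩ := hG.zero_of_add_eq_zero (h ▸ hs : y + z = 0)
    exact hxy (hx.trans hy.symm)
  · obtain ⟨c, hc, p, hp, hup⟩ := hG.2 {x, y} {z} ⟨x, by simp⟩ ⟨z, by simp⟩ (by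
      intro hE
      have : x + z ∈ ({x, y} : Finset G) + {z} := Finset.add_mem_add (by simp) (by simp)
      rw [hE] at this
      simp only [Finset.mem_singleton] at this
      exact hs this)
    have hcval : x + z = c := by
      rw [Finset.mem_add] at hc
      obtain ⟨u, hu, v, hv, huv⟩ := hc
      simp only [Finset.mem_insert, Finset.mem_singleton] at hu hv
      subst hv
      rcases hu with rfl | rfl
      · exact huv
      · rw [h]; exact huv
    have h1 : ((x, z) : G × G).1 ∈ ({x, y} : Finset G) ∧ ((x, z) : G × G).2 ∈ ({z} : Finset G) ∧ ((x, z) : G × G).1 + ((x, z) : G × G).2 = c :=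
      ⟨by simp, by simp, hcval⟩
    have h2 : ((y, z) : G × G).1 ∈ ({x, y} : Finset G) ∧ ((y, z) : G × G).2 ∈ ({z} : Finset G) ∧ ((y, z) : G × G).1 + ((y, z) : G × G).2 = c :=
      ⟨by simp, by simp, by rw [show (y,z).1 + (y,z).2 = y + z from rfl, ← h]; exact hcval⟩
    have e1 := hup _ h1
    have e2 := hup _ h2
    rw [← e2] at e1
    exact hxy (congrArg Prod.fst e1)

lemma OrderedLike.torsionfree (hG : OrderedLike G) {x y : G} (n : ℕ) (hn : n ≠ 0)
    (h : n • x = n • y) : x = y := by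
  by_contra hxy
  set S₁ : Finset G := {x, y} with hS₁
  set S₂ : Finset G := (Finset.range n).image (fun k => k • x + (n - 1 - k) • y) with hS₂
  set u : ℕ → G := fun j => j • x + (n - j) • y with hu
  have memS₂ : ∀ k, k ≤ n - 1 → k • x + (n - 1 - k) • y ∈ S₂ := fun k hk =>
    Finset.mem_image_of_mem _ (Finset.mem_range.2 (by omega))
  have hne₂ : S₂.Nonempty := ⟨0 • x + (n-1-0) • y, memS₂ 0 (by omega)⟩
  have hx_add : ∀ j, j < n → x + (j • x + (n - 1 - j) • y) = u (j+1) := by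
    intro j hj
    simp only [hu]
    rw [← add_assoc, ← succ_nsmul']
    congr 2
    omega
  have hy_add : ∀ j, j < n → y + (j • x + (n - 1 - j) • y) = u j := by
    intro j hj
    simp only [hu]
    rw [show n - j = (n-1-j) + 1 from by omega, succ_nsmul']
    exact add_left_comm _ _ _
  have huun : u n = u 0 := by simp only [hu]; simpa using h
  have two : ∀ j, 1 ≤ j → j ≤ n → ∃ p q : G × G,
      (p.1 ∈ S₁ ∧ p.2 ∈ S₂ ∧ p.1 + p.2 = u j) ∧ (q.1 ∈ S₁ ∧ q.2 ∈ S₂ ∧ q.1 + q.2 = u j) ∧ p ≠ q := by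
    intro j h1 h2
    by_cases hj : j ≤ n - 1
    · refine ⟨(x, (j-1) • x + (n - 1 - (j-1)) • y), (y, j • x + (n - 1 - j) • y),
        ⟨by simp [hS₁], memS₂ (j-1) (by omega), ?_⟩, ⟨by simp [hS₁], memS₂ j hj, hy_add j (by omega)⟩,
        by simp only [Prod.mk.injEq, ne_eq, not_and]; intro hxy'; exact absurd hxy' hxy⟩
      · have := hx_add (j-1) (by omega)
        rwa [show j - 1 + 1 = j from by omega] at this
    · have hj' : j = n := by omega
      refine ⟨(x, (n-1) • x + (n - 1 - (n-1)) • y), (y, 0 • x + (n - 1 - 0) • y),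
        ⟨by simp [hS₁], memS₂ (n-1) (by omega), ?_⟩, ⟨by simp [hS₁], memS₂ 0 (by omega), ?_⟩,
        by simp only [Prod.mk.injEq, ne_eq, not_and]; intro hxy'; exact absurd hxy' hxy⟩
      · rw [hj']
        have := hx_add (n-1) (by omega)
        rwa [show n - 1 + 1 = n from by omega] at this
      · rw [hj', hy_add 0 (by omega), ← huun]
  have hsum_ne : S₁ + S₂ ≠ ({0} : Finset G) := by
    intro hE
    have hx0 : x + (0 • x + (n-1-0) • y) ∈ S₁ + S₂ :=
      Finset.add_mem_add (by simp [hS₁]) (memS₂ 0 (by omega))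
    rw [hE, Finset.mem_singleton] at hx0
    obtain ⟨hx, -⟩ := hG.zero_of_add_eq_zero hx0
    have hy0 : y + ((n-1) • x + (n - 1 - (n-1)) • y) ∈ S₁ + S₂ :=
      Finset.add_mem_add (by simp [hS₁]) (memS₂ (n-1) (by omega))
    rw [hE, Finset.mem_singleton] at hy0
    obtain ⟨hy, -⟩ := hG.zero_of_add_eq_zero hy0
    exact hxy (hx.trans hy.symm)
  obtain ⟨c, hc, p, hp, hup⟩ := hG.2 S₁ S₂ ⟨x, by simp [hS₁]⟩ hne₂ hsum_ne
  rw [Finset.mem_add] at hc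
  obtain ⟨s, hs, t, ht, hst⟩ := hc
  rw [hS₂, Finset.mem_image] at ht
  obtain ⟨k, hk, rfl⟩ := ht
  rw [Finset.mem_range] at hk
  simp only [hS₁, Finset.mem_insert, Finset.mem_singleton] at hs
  have hcj : ∃ j, 1 ≤ j ∧ j ≤ n ∧ c = u j := by
    rcases hs with rfl | rfl
    · exact ⟨k + 1, by omega, by omega, by rw [← hst, hx_add k hk]⟩
    · by_cases hk' : k = 0
      · subst hk'
        exact ⟨n, by omega, le_refl n, by rw [← hst, hy_add 0 (by omega), huun.symm]⟩
      · exact ⟨k, by omega, by omega, by rw [← hst, hy_add k hk]⟩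
  obtain ⟨j, hj1, hj2, rfl⟩ := hcj
  obtain ⟨p1, p2, hp1, hp2, hpq⟩ := two j hj1 hj2
  exact hpq ((hup _ hp1).trans (hup _ hp2).symm)

lemma OrderedLike.supports_eq_zero (hG : OrderedLike G) (S₁ S₂ : Finset G)
    (h₁ : S₁.Nonempty) (h₂ : S₂.Nonempty)
    (H : ∀ σ τ, σ ∈ S₁ → τ ∈ S₂ →
      (∀ σ' τ', σ' ∈ S₁ → τ' ∈ S₂ → σ' + τ' = σ + τ → σ' = σ ∧ τ' = τ) → σ + τ = 0) :
    (∀ σ ∈ S₁, σ = 0) ∧ (∀ τ ∈ S₂, τ = 0) := by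
  classical
  set F : Finset G := S₁ ∪ S₂ with hF
  set V := {x : G // x ∈ F}
  set ψ : (V → ℕ) → G := fun f => ∑ v : V, f v • (v : G) with hψ
  have psi_add : ∀ f g : V → ℕ, ψ (f + g) = ψ f + ψ g := by
    intro f g
    simp only [hψ, Pi.add_apply, add_smul]
    rw [Finset.sum_add_distrib]
  have psi_smul : ∀ (k : ℕ) (f : V → ℕ), ψ (k • f) = k • ψ f := by
    intro k f
    simp only [hψ, Pi.smul_apply, smul_eq_mul, mul_smul]
    rw [Finset.smul_sum]
  have psi_single : ∀ v : V, ψ (Pi.single v 1) = (v : G) := by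
    intro v
    simp only [hψ]
    rw [Finset.sum_eq_single v]
    · simp
    · intro w _ hw
      simp [Pi.single_apply, hw]
    · simp
  -- the subgroup of relations
  set K : AddSubgroup (V → ℤ) :=
    { carrier := {z | ∃ x y : V → ℕ, (fun v => (x v : ℤ) - y v) = z ∧ ψ x = ψ y}
      zero_mem' := ⟨0, 0, by funext v; simp, rfl⟩
      add_mem' := by
        rintro z₁ z₂ ⟨x₁, y₁, rfl, e₁⟩ ⟨x₂, y₂, rfl, e₂⟩
        exact ⟨x₁ + x₂, y₁ + y₂, by funext v; simp; ring,
          by rw [psi_add, psi_add, e₁, e₂]⟩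
      neg_mem' := by
        rintro z ⟨x, y, rfl, e⟩
        exact ⟨y, x, by funext v; simp, e.symm⟩ } with hK
  set K' : Submodule ℤ (V → ℤ) := AddSubgroup.toIntSubmodule K with hK'
  have memK : ∀ z : V → ℤ, z ∈ K' ↔ ∃ x y : V → ℕ, (fun v => (x v : ℤ) - y v) = z ∧ ψ x = ψ y := by
    intro z; rfl
  set Q := (V → ℤ) ⧸ K' with hQ
  set q : (V → ℕ) → Q := fun x => Submodule.Quotient.mk (fun v => (x v : ℤ)) with hq
  have q_iff : ∀ x y : V → ℕ, q x = q y ↔ ψ x = ψ y := by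
    intro x y
    simp only [hq]
    rw [Submodule.Quotient.eq]
    constructor
    · intro h
      rw [memK] at h
      obtain ⟨x', y', he, hpsi⟩ := h
      have hxy : x + y' = y + x' := by
        funext v
        have := congrFun he v
        simp only [Pi.sub_apply] at this
        have h2 : (x v : ℤ) + y' v = (y v : ℤ) + x' v := by omega
        exact_mod_cast h2
      have t1 : ψ x + ψ y' = ψ y + ψ x' := by rw [← psi_add, ← psi_add, hxy]
      rw [hpsi] at t1
      exact hG.cancel t1
    · intro h
      rw [memK]
      exact ⟨x, y, by funext v; simp, h⟩
  have q_add : ∀ x y : V → ℕ, q (x + y) = q x + q y := by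
    intro x y
    simp only [hq]
    rw [← Submodule.Quotient.mk_add]
    exact congrArg _ (by funext v; simp)
  -- torsion-freeness of Q
  have posK : ∀ (k : ℕ), k ≠ 0 → ∀ z : V → ℤ, (k : ℤ) • z ∈ K' → z ∈ K' := by
    intro k hk z hz
    rw [memK] at hz
    obtain ⟨x, y, he, hpsi⟩ := hz
    set p : V → ℕ := fun v => (z v).toNat with hp
    set p' : V → ℕ := fun v => (-(z v)).toNat with hp'
    have hxy : x + k • p' = y + k • p := by
      funext v
      have hcv := congrFun he v
      simp only [Pi.smul_apply, smul_eq_mul] at hcv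
      have hzz : (z v) = ((z v).toNat : ℤ) - ((-(z v)).toNat : ℤ) := by omega
      rw [hzz, mul_sub] at hcv
      have h2 : (x v : ℤ) + k * ((-(z v)).toNat : ℤ) = (y v : ℤ) + k * ((z v).toNat : ℤ) := by
        linarith
      have h3 : (x v : ℤ) + ((k * (-(z v)).toNat : ℕ) : ℤ) = (y v : ℤ) + ((k * (z v).toNat : ℕ) : ℤ) := by
        push_cast; exact h2
      simp only [Pi.add_apply, Pi.smul_apply, smul_eq_mul]
      exact_mod_cast h3
    have := congrArg ψ hxy
    rw [psi_add, psi_add, psi_smul, psi_smul, hpsi] at this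
    have h4 : (k • ψ p' : G) + ψ y = k • ψ p + ψ y := by
      rw [add_comm (k • ψ p'), add_comm (k • ψ p)]; exact this
    have h5 := hG.cancel h4
    have h6 : ψ p' = ψ p := hG.torsionfree k hk h5
    rw [memK]
    exact ⟨p, p', by funext v; simp only [hp, hp']; omega, h6.symm⟩
  haveI : NoZeroSMulDivisors ℤ Q := by
    constructor
    intro c m hcm
    by_cases hc : c = 0
    · exact Or.inl hc
    · right
      obtain ⟨z, rfl⟩ := Submodule.Quotient.mk_surjective K' m
      rw [← Submodule.Quotient.mk_smul, Submodule.Quotient.mk_eq_zero] at hcm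
      rw [Submodule.Quotient.mk_eq_zero]
      rcases lt_or_gt_of_ne hc with hneg | hpos
      · have : ((-c).toNat : ℤ) • (-z) ∈ K' := by
          have : ((-c).toNat : ℤ) = -c := by omega
          rw [this, neg_smul_neg]
          exact hcm
        have := posK (-c).toNat (by omega) (-z) this
        simpa using K'.neg_mem this
      · have : ((c.toNat : ℤ)) • z ∈ K' := by
          have : ((c).toNat : ℤ) = c := by omega
          rw [this]; exact hcm
        exact posK c.toNat (by omega) z this
  haveI : Module.Finite ℤ Q :=
    Module.Finite.of_surjective K'.mkQ (Submodule.Quotient.mk_surjective K')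
  obtain ⟨n, bQ⟩ := Module.basisOfFiniteTypeTorsionFree' (R := ℤ) (M := Q)
  set L := Lex (Fin n →₀ ℤ) with hL
  set η : G → L := fun g => if hg : g ∈ F then toLex (bQ.repr (q (Pi.single ⟨g, hg⟩ 1))) else 0
    with hη
  have ηval : ∀ (g : G) (hg : g ∈ F), η g = toLex (bQ.repr (q (Pi.single ⟨g, hg⟩ 1))) := by
    intro g hg; simp only [hη, dif_pos hg]
  have E1 : ∀ g ∈ F, ∀ g' ∈ F, η g = η g' → g = g' := by
    intro g hg g' hg' he
    rw [ηval g hg, ηval g' hg'] at he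
    have h1 : q (Pi.single (⟨g, hg⟩ : V) 1) = q (Pi.single (⟨g', hg'⟩ : V) 1) :=
      bQ.repr.injective (toLex.injective he)
    rw [q_iff, psi_single, psi_single] at h1
    exact h1
  have E2 : ∀ g ∈ F, ∀ h ∈ F, ∀ g' ∈ F, ∀ h' ∈ F, g + h = g' + h' → η g + η h = η g' + η h' := by
    intro g hg h hh g' hg' h' hh' he
    rw [ηval g hg, ηval h hh, ηval g' hg', ηval h' hh']
    have : ∀ (u : G) (hu : u ∈ F) (w : G) (hw : w ∈ F),
        toLex (bQ.repr (q (Pi.single (⟨u,hu⟩:V) 1))) + toLex (bQ.repr (q (Pi.single (⟨w,hw⟩:V) 1)))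
        = toLex (bQ.repr (q (Pi.single (⟨u,hu⟩:V) 1 + Pi.single (⟨w,hw⟩:V) 1))) := by
      intro u hu w hw
      rw [q_add, map_add]
      rfl
    rw [this g hg h hh, this g' hg' h' hh']
    have hq2 : q (Pi.single (⟨g,hg⟩:V) 1 + Pi.single (⟨h,hh⟩:V) 1)
        = q (Pi.single (⟨g',hg'⟩:V) 1 + Pi.single (⟨h',hh'⟩:V) 1) := by
      rw [q_iff, psi_add, psi_add, psi_single, psi_single, psi_single, psi_single]
      exact he
    rw [hq2]
  -- memberships
  have mem₁ : ∀ σ ∈ S₁, σ ∈ F := fun σ h => Finset.mem_union_left _ h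
  have mem₂ : ∀ τ ∈ S₂, τ ∈ F := fun τ h => Finset.mem_union_right _ h
  -- max / min argument
  obtain ⟨σM, hσM, hmax₁⟩ := S₁.exists_max_image η h₁
  obtain ⟨τM, hτM, hmax₂⟩ := S₂.exists_max_image η h₂
  obtain ⟨σm, hσm, hmin₁⟩ := S₁.exists_min_image η h₁
  obtain ⟨τm, hτm, hmin₂⟩ := S₂.exists_min_image η h₂
  have uniqM : ∀ σ' τ', σ' ∈ S₁ → τ' ∈ S₂ → σ' + τ' = σM + τM → σ' = σM ∧ τ' = τM := by
    intro σ' τ' h1 h2 h3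
    have hsum := E2 σ' (mem₁ _ h1) τ' (mem₂ _ h2) σM (mem₁ _ hσM) τM (mem₂ _ hτM) h3
    have l1 : η σ' ≤ η σM := hmax₁ σ' h1
    have l2 : η τ' ≤ η τM := hmax₂ τ' h2
    have e1 : η σ' = η σM := by
      rcases lt_or_eq_of_le l1 with hlt | he
      · exact absurd hsum (ne_of_lt (add_lt_add_of_lt_of_le hlt l2))
      · exact he
    have e2 : η τ' = η τM := by
      rw [e1] at hsum
      exact add_left_cancel hsum
    exact ⟨E1 _ (mem₁ _ h1) _ (mem₁ _ hσM) e1, E1 _ (mem₂ _ h2) _ (mem₂ _ hτM) e2⟩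
  have uniqm : ∀ σ' τ', σ' ∈ S₁ → τ' ∈ S₂ → σ' + τ' = σm + τm → σ' = σm ∧ τ' = τm := by
    intro σ' τ' h1 h2 h3
    have hsum := E2 σ' (mem₁ _ h1) τ' (mem₂ _ h2) σm (mem₁ _ hσm) τm (mem₂ _ hτm) h3
    have l1 : η σm ≤ η σ' := hmin₁ σ' h1
    have l2 : η τm ≤ η τ' := hmin₂ τ' h2
    have e1 : η σ' = η σm := by
      rcases lt_or_eq_of_le l1 with hlt | he
      · exact absurd hsum.symm (ne_of_lt (add_lt_add_of_lt_of_le hlt l2))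
      · exact he.symm
    have e2 : η τ' = η τm := by
      rw [e1] at hsum
      exact add_left_cancel hsum
    exact ⟨E1 _ (mem₁ _ h1) _ (mem₁ _ hσm) e1, E1 _ (mem₂ _ h2) _ (mem₂ _ hτm) e2⟩
  have hM0 := H σM τM hσM hτM uniqM
  have hm0 := H σm τm hσm hτm uniqm
  obtain ⟨hσM0, hτM0⟩ := hG.zero_of_add_eq_zero hM0
  obtain ⟨hσm0, hτm0⟩ := hG.zero_of_add_eq_zero hm0
  constructor
  · intro σ hσ
    have h1 : η σ ≤ η σM := hmax₁ σ hσ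
    have h2 : η σm ≤ η σ := hmin₁ σ hσ
    rw [hσM0] at h1
    rw [hσm0] at h2
    have : η σ = η (0 : G) := le_antisymm h1 h2
    exact E1 σ (mem₁ _ hσ) 0 (mem₁ _ (hσM0 ▸ hσM)) this
  · intro τ hτ
    have h1 : η τ ≤ η τM := hmax₂ τ hτ
    have h2 : η τm ≤ η τ := hmin₂ τ hτ
    rw [hτM0] at h1
    rw [hτm0] at h2
    have : η τ = η (0 : G) := le_antisymm h1 h2
    exact E1 τ (mem₂ _ hτ) 0 (mem₂ _ (hτM0 ▸ hτM)) this

end Aux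

/-- If `G` is an ordered-like additive semigroup and
`A = ⊕_{σ∈G} A_σ` is a `G`-graded ring which is a graded domain (the product of two
nonzero homogeneous elements is nonzero), then `A₀ = 𝒜 0` is a completely prime
subring of `A`: for nonzero `a b : A` with `a * b ∈ 𝒜 0` we have `a ∈ 𝒜 0` or `b ∈ 𝒜 0`. -/
theorem gradeZero_completelyPrime_of_orderedLike
    {G : Type*} [AddCommMonoid G] [DecidableEq G] (hG : OrderedLike G)
    {A : Type*} [Ring A] (𝒜 : G → AddSubgroup A) [GradedRing 𝒜]
    (hdom : ∀ (i j : G) (a b : A), a ∈ 𝒜 i → b ∈ 𝒜 j → a ≠ 0 → b ≠ 0 → a * b ≠ 0)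
    (a b : A) (ha : a ≠ 0) (hb : b ≠ 0) (hab : a * b ∈ 𝒜 0) :
    a ∈ 𝒜 0 ∨ b ∈ 𝒜 0 := by
  classical
  set ra := DirectSum.decompose 𝒜 a with hra
  set rb := DirectSum.decompose 𝒜 b with hrb
  set S₁ := ra.support with hS₁
  set S₂ := rb.support with hS₂
  have hne₁ : S₁.Nonempty := by
    rw [Finset.nonempty_iff_ne_empty, hS₁, Ne, DFinsupp.support_eq_empty]
    intro h
    apply ha
    have := (DirectSum.decompose 𝒜).injective (a₁ := a) (a₂ := 0)
    rw [DirectSum.decompose_zero] at this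
    exact this h
  have hne₂ : S₂.Nonempty := by
    rw [Finset.nonempty_iff_ne_empty, hS₂, Ne, DFinsupp.support_eq_empty]
    intro h
    apply hb
    have := (DirectSum.decompose 𝒜).injective (a₁ := b) (a₂ := 0)
    rw [DirectSum.decompose_zero] at this
    exact this h
  have hmulsupp : ∀ c : G, c ≠ 0 → ((DirectSum.decompose 𝒜 (a * b)) c : A) = 0 := by
    intro c hc
    rw [DirectSum.decompose_of_mem 𝒜 hab, DirectSum.of_eq_of_ne _ _ _ hc]
    rfl
  have H : ∀ σ τ, σ ∈ S₁ → τ ∈ S₂ →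
      (∀ σ' τ', σ' ∈ S₁ → τ' ∈ S₂ → σ' + τ' = σ + τ → σ' = σ ∧ τ' = τ) → σ + τ = 0 := by
    intro σ τ hσ hτ huniq
    by_contra hc
    have hcoe : ((ra * rb) (σ + τ) : A) =
        ∑ ij ∈ (ra.support ×ˢ rb.support).filter (fun ij : G × G => ij.1 + ij.2 = σ + τ),
          ((ra ij.1 : A) * (rb ij.2 : A)) := DirectSum.coe_mul_apply 𝒜 ra rb (σ + τ)
    have hfilter : (ra.support ×ˢ rb.support).filter (fun ij : G × G => ij.1 + ij.2 = σ + τ)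
        = {(σ, τ)} := by
      ext ⟨x, y⟩
      simp only [Finset.mem_filter, Finset.mem_product, Finset.mem_singleton, Prod.mk.injEq]
      constructor
      · rintro ⟨⟨hx, hy⟩, hxy⟩
        exact huniq x y hx hy hxy
      · rintro ⟨rfl, rfl⟩
        exact ⟨⟨hσ, hτ⟩, rfl⟩
    rw [hfilter, Finset.sum_singleton] at hcoe
    have hterm : (ra σ : A) * (rb τ : A) ≠ 0 := by
      apply hdom σ τ _ _ (ra σ).2 (rb τ).2
      · intro h0
        rw [hS₁, DFinsupp.mem_support_iff] at hσ
        exact hσ (Subtype.ext h0)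
      · intro h0
        rw [hS₂, DFinsupp.mem_support_iff] at hτ
        exact hτ (Subtype.ext h0)
    have hmul : ra * rb = DirectSum.decompose 𝒜 (a * b) := by
      rw [hra, hrb, DirectSum.decompose_mul]
    rw [hmul] at hcoe
    rw [hmulsupp (σ + τ) hc] at hcoe
    exact hterm hcoe.symm
  obtain ⟨hz₁, hz₂⟩ := hG.supports_eq_zero S₁ S₂ hne₁ hne₂ H
  left
  have : a = ∑ i ∈ S₁, (ra i : A) := by
    rw [hS₁, hra]
    exact (DirectSum.sum_support_decompose 𝒜 a).symm
  rw [this]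
  apply AddSubgroup.sum_mem
  intro i hi
  have h0 : i = 0 := hz₁ i hi
  rw [← h0]
  exact (ra i).2
end

section
/- Let G be an arbitrary abelian additive semigroup with zero and let A = ⊕_{σ∈G} A_σ be a G-graded ring that is a graded domain (the product of two nonzero homogeneous elements is nonzero). If A₀ is a completely prime subring of A, then A₀ is a strongly completely prime subring of A: for any two nonzero elements a, b of A, if ab ∈ A₀ then a ∈ A₀ and b ∈ A₀. -/
open DirectSum

private lemma key_left {G : Type*} [AddCommMonoid G] [DecidableEq G]
    {A : Type*} [Ring A] (𝒜 : G → AddSubgroup A) [GradedRing 𝒜]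
    {a b : A} (h0 : a ∈ 𝒜 0) (j : G) :
    (DirectSum.decompose 𝒜 (a * b) j : A) = a * (DirectSum.decompose 𝒜 b j : A) := by
  classical
  conv_lhs => rw [← DirectSum.sum_support_decompose 𝒜 b]
  rw [Finset.mul_sum, DirectSum.decompose_sum, DFinsupp.finset_sum_apply, AddSubmonoidClass.coe_finset_sum]
  have hmem : ∀ i : G, a * (DirectSum.decompose 𝒜 b i : A) ∈ 𝒜 i := fun i => by
    simpa using SetLike.mul_mem_graded h0 (DirectSum.decompose 𝒜 b i).2
  rw [Finset.sum_eq_single j]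
  · rw [DirectSum.decompose_of_mem 𝒜 (hmem j), DirectSum.of_eq_same]
  · intro i _ hij
    rw [DirectSum.decompose_of_mem 𝒜 (hmem i), DirectSum.of_eq_of_ne _ _ _ hij.symm,
      AddSubgroup.coe_zero]
  · intro hj
    rw [DFinsupp.notMem_support_iff.mp hj, AddSubgroup.coe_zero, mul_zero]
    simp

private lemma key_right {G : Type*} [AddCommMonoid G] [DecidableEq G]
    {A : Type*} [Ring A] (𝒜 : G → AddSubgroup A) [GradedRing 𝒜]
    {a b : A} (h0 : b ∈ 𝒜 0) (j : G) :
    (DirectSum.decompose 𝒜 (a * b) j : A) = (DirectSum.decompose 𝒜 a j : A) * b := by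
  classical
  conv_lhs => rw [← DirectSum.sum_support_decompose 𝒜 a]
  rw [Finset.sum_mul, DirectSum.decompose_sum, DFinsupp.finset_sum_apply, AddSubmonoidClass.coe_finset_sum]
  have hmem : ∀ i : G, (DirectSum.decompose 𝒜 a i : A) * b ∈ 𝒜 i := fun i => by
    simpa using SetLike.mul_mem_graded (DirectSum.decompose 𝒜 a i).2 h0
  rw [Finset.sum_eq_single j]
  · rw [DirectSum.decompose_of_mem 𝒜 (hmem j), DirectSum.of_eq_same]
  · intro i _ hij
    rw [DirectSum.decompose_of_mem 𝒜 (hmem i), DirectSum.of_eq_of_ne _ _ _ hij.symm,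
      AddSubgroup.coe_zero]
  · intro hj
    rw [DFinsupp.notMem_support_iff.mp hj, AddSubgroup.coe_zero, zero_mul]
    simp

/-- Let `G` be an abelian additive semigroup with zero and
`A = ⊕_{σ∈G} A_σ` a `G`-graded ring which is a graded domain (the product of two
nonzero homogeneous elements is nonzero).  If `A₀ = 𝒜 0` is a completely prime
subring of `A`, then it is strongly completely prime: for nonzero `a b : A` with
`a * b ∈ 𝒜 0` we have `a ∈ 𝒜 0` and `b ∈ 𝒜 0`. -/
theorem gradeZero_stronglyCompletelyPrime_of_completelyPrime
    {G : Type*} [AddCommMonoid G] [DecidableEq G]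
    {A : Type*} [Ring A] (𝒜 : G → AddSubgroup A) [GradedRing 𝒜]
    (hdom : ∀ (i j : G) (a b : A), a ∈ 𝒜 i → b ∈ 𝒜 j → a ≠ 0 → b ≠ 0 → a * b ≠ 0)
    (hcp : ∀ a b : A, a ≠ 0 → b ≠ 0 → a * b ∈ 𝒜 0 → a ∈ 𝒜 0 ∨ b ∈ 𝒜 0)
    (a b : A) (ha : a ≠ 0) (hb : b ≠ 0) (hab : a * b ∈ 𝒜 0) :
    a ∈ 𝒜 0 ∧ b ∈ 𝒜 0 := by
  classical
  rcases hcp a b ha hb hab with h0 | h0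
  · refine ⟨h0, ?_⟩
    have hzero : ∀ j : G, j ≠ 0 → (DirectSum.decompose 𝒜 b j : A) = 0 := by
      intro j hj
      by_contra hne
      refine hdom 0 j a _ h0 (DirectSum.decompose 𝒜 b j).2 ha hne ?_
      rw [← key_left 𝒜 h0 j, DirectSum.decompose_of_mem_ne 𝒜 hab (Ne.symm hj)]
    rw [← DirectSum.sum_support_decompose 𝒜 b]
    refine AddSubgroup.sum_mem _ fun i _ => ?_
    rcases eq_or_ne i 0 with rfl | hi
    · exact (DirectSum.decompose 𝒜 b 0).2
    · rw [hzero i hi]; exact zero_mem _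
  · refine ⟨?_, h0⟩
    have hzero : ∀ j : G, j ≠ 0 → (DirectSum.decompose 𝒜 a j : A) = 0 := by
      intro j hj
      by_contra hne
      refine hdom j 0 _ b (DirectSum.decompose 𝒜 a j).2 h0 hne hb ?_
      rw [← key_right 𝒜 h0 j, DirectSum.decompose_of_mem_ne 𝒜 hab (Ne.symm hj)]
    rw [← DirectSum.sum_support_decompose 𝒜 a]
    refine AddSubgroup.sum_mem _ fun i _ => ?_
    rcases eq_or_ne i 0 with rfl | hi
    · exact (DirectSum.decompose 𝒜 a 0).2
    · rw [hzero i hi]; exact zero_mem _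
end

section
/- Let G be an ordered-like additive semigroup and let A = ⊕_{σ∈G} A_σ be a G-graded ring that is a graded domain (the product of two nonzero homogeneous elements is nonzero). Then A₀ is a strongly completely prime subring of A: for any two nonzero elements a, b of A, if ab ∈ A₀ then a ∈ A₀ and b ∈ A₀. -/
open Pointwise

section GrothendieckAux

variable (G : Type*) [AddCommMonoid G] [IsCancelAdd G]

/-- The setoid used to construct the Grothendieck group of a cancellative
commutative monoid. -/
def gkSetoid : Setoid (G × G) where
  r p q := p.1 + q.2 = q.1 + p.2
  iseqv := by
    refine ⟨fun p => rfl, fun h => h.symm, ?_⟩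
    intro p q r h1 h2
    have h3 : (q.1 + q.2) + (p.1 + r.2) = (q.1 + q.2) + (r.1 + p.2) := by
      calc (q.1 + q.2) + (p.1 + r.2) = (p.1 + q.2) + (q.1 + r.2) := by abel
        _ = (q.1 + p.2) + (r.1 + q.2) := by rw [h1, h2]
        _ = (q.1 + q.2) + (r.1 + p.2) := by abel
    exact IsLeftCancelAdd.add_left_cancel _ h3

/-- The Grothendieck group of a cancellative commutative monoid. -/
def GK := Quotient (gkSetoid G)

namespace GK

variable {G}

/-- The class of the formal difference `x - y`. -/
def mk (x y : G) : GK G := Quotient.mk (gkSetoid G) (x, y)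

lemma sound {x y x' y' : G} (h : x + y' = x' + y) : mk x y = mk x' y' :=
  Quotient.sound h

lemma exact {x y x' y' : G} (h : mk x y = mk x' y') : x + y' = x' + y :=
  Quotient.exact h

lemma ind {motive : GK G → Prop} (h : ∀ x y : G, motive (mk x y)) :
    ∀ q : GK G, motive q :=
  fun q => Quotient.ind (fun p => by obtain ⟨x, y⟩ := p; exact h x y) q

lemma exists_rep (q : GK G) : ∃ x y : G, q = mk x y :=
  ind (motive := fun q => ∃ x y : G, q = mk x y) (fun x y => ⟨x, y, rfl⟩) q

instance : Add (GK G) :=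
  ⟨Quotient.map₂ (fun p q => (p.1 + q.1, p.2 + q.2)) (by
    rintro ⟨a, b⟩ ⟨a', b'⟩ (h1 : a + b' = a' + b) ⟨c, d⟩ ⟨c', d'⟩ (h2 : c + d' = c' + d)
    show (a + c) + (b' + d') = (a' + c') + (b + d)
    calc (a + c) + (b' + d') = (a + b') + (c + d') := by abel
      _ = (a' + b) + (c' + d) := by rw [h1, h2]
      _ = (a' + c') + (b + d) := by abel)⟩

instance : Neg (GK G) :=
  ⟨Quotient.map (fun p => (p.2, p.1)) (by
    rintro ⟨a, b⟩ ⟨a', b'⟩ (h : a + b' = a' + b)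
    show b + a' = b' + a
    rw [add_comm, add_comm b' a, h])⟩

instance : Zero (GK G) := ⟨mk 0 0⟩

lemma mk_add (x y x' y' : G) : mk x y + mk x' y' = mk (x + x') (y + y') := rfl

lemma neg_mk (x y : G) : -(mk x y) = mk y x := rfl

lemma zero_def : (0 : GK G) = mk 0 0 := rfl

instance : AddCommGroup (GK G) where
  add_assoc := by
    refine ind fun a b => ind fun c d => ind fun e f => ?_
    rw [mk_add, mk_add, mk_add, mk_add]
    exact sound (by abel)
  zero_add := by
    refine ind fun a b => ?_
    rw [zero_def, mk_add]
    exact sound (by abel)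
  add_zero := by
    refine ind fun a b => ?_
    rw [zero_def, mk_add]
    exact sound (by abel)
  add_comm := by
    refine ind fun a b => ind fun c d => ?_
    rw [mk_add, mk_add]
    exact sound (by abel)
  neg_add_cancel := by
    refine ind fun a b => ?_
    rw [neg_mk, mk_add, zero_def]
    exact sound (by abel)
  nsmul := nsmulRec
  zsmul := zsmulRec

/-- The canonical additive homomorphism from a cancellative commutative monoid to its
Grothendieck group. -/
def of : G →ₙ+ GK G where
  toFun g := mk g 0
  map_add' a b := by rw [mk_add]; exact sound (by abel)

lemma of_injective : Function.Injective (of : G →ₙ+ GK G) := by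
  intro x y h
  have := exact (h : mk x 0 = mk y 0)
  simpa using this

/-- Every finite set in the Grothendieck group has a common denominator. -/
lemma exists_common_denom (X : Finset (GK G)) :
    ∃ d : G, ∀ x ∈ X, ∃ g : G, x = mk g d := by
  classical
  induction X using Finset.induction_on with
  | empty => exact ⟨0, by simp⟩
  | @insert x X hx ih =>
      obtain ⟨d, hd⟩ := ih
      obtain ⟨x₁, y₁, hp⟩ := exists_rep x
      refine ⟨d + y₁, ?_⟩
      intro y hy
      rcases Finset.mem_insert.mp hy with rfl | hy
      · exact ⟨x₁ + d, hp.trans (sound (by abel))⟩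
      · obtain ⟨g, hg⟩ := hd y hy
        exact ⟨g + y₁, hg.trans (sound (by abel))⟩

lemma uniqueSums [UniqueSums G] : UniqueSums (GK G) := by
  classical
  constructor
  intro A B hA hB
  obtain ⟨d₁, hd₁⟩ := exists_common_denom A
  obtain ⟨d₂, hd₂⟩ := exists_common_denom B
  -- choice functions
  have hfA : ∀ x ∈ A, ∃ g : G, x = mk g d₁ := hd₁
  have hfB : ∀ y ∈ B, ∃ g : G, y = mk g d₂ := hd₂
  set f : GK G → G := fun x => if h : ∃ g : G, x = mk g d₁ then h.choose else 0 with hf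
  set k : GK G → G := fun y => if h : ∃ g : G, y = mk g d₂ then h.choose else 0 with hk
  have hfA' : ∀ x ∈ A, x = mk (f x) d₁ := by
    intro x hx
    have h := hfA x hx
    simp only [hf, dif_pos h]
    exact h.choose_spec
  have hfB' : ∀ y ∈ B, y = mk (k y) d₂ := by
    intro y hy
    have h := hfB y hy
    simp only [hk, dif_pos h]
    exact h.choose_spec
  obtain ⟨a₀, ha₀, b₀, hb₀, hu⟩ :=
    UniqueSums.uniqueAdd_of_nonempty (hA.image f) (hB.image k)
  obtain ⟨x₀, hx₀, rfl⟩ := Finset.mem_image.mp ha₀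
  obtain ⟨y₀, hy₀, rfl⟩ := Finset.mem_image.mp hb₀
  refine ⟨x₀, hx₀, y₀, hy₀, ?_⟩
  intro x y hx hy hxy
  have hx' := hfA' x hx
  have hy' := hfB' y hy
  have hx₀' := hfA' x₀ hx₀
  have hy₀' := hfB' y₀ hy₀
  have hsum : mk (f x + k y) (d₁ + d₂) = mk (f x₀ + k y₀) (d₁ + d₂) := by
    rw [← mk_add, ← mk_add, ← hx', ← hy', ← hx₀', ← hy₀', hxy]
  have hGeq : f x + k y = f x₀ + k y₀ := by
    have := exact hsum
    exact IsRightCancelAdd.add_right_cancel _ this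
  have := hu (Finset.mem_image_of_mem f hx) (Finset.mem_image_of_mem k hy) hGeq
  constructor
  · rw [hx', hx₀', this.1]
  · rw [hy', hy₀', this.2]

end GK

end GrothendieckAux

section OrderedLikeAux

variable {G : Type*} [AddCommMonoid G] [DecidableEq G]

lemma OrderedLike.cancel_s4 (hG : OrderedLike G) :
    ∀ a b c : G, a + b = a + c → b = c := by
  intro a b c h
  by_cases h0 : a + b = 0
  · have ha : a = 0 := hG.1 _ _ h0
    have hb : b = 0 := hG.1 b a (by rwa [add_comm] at h0)
    have hc : c = 0 := hG.1 c a (by rw [add_comm, ← h]; exact h0)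
    rw [hb, hc]
  · obtain ⟨c₀, hc₀, p, hp, hup⟩ :=
      hG.2 {a} {b, c} ⟨a, Finset.mem_singleton_self a⟩ ⟨b, by simp⟩ (by
        intro hS
        apply h0
        have : a + b ∈ ({a} : Finset G) + {b, c} :=
          Finset.add_mem_add (Finset.mem_singleton_self a) (by simp)
        rw [hS] at this
        exact Finset.mem_singleton.mp this)
    have hc₀' : c₀ = a + b := by
      rw [Finset.mem_add] at hc₀
      obtain ⟨y, hy, z, hz, hyz⟩ := hc₀
      rw [Finset.mem_singleton] at hy
      subst hy
      rcases Finset.mem_insert.mp hz with rfl | hz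
      · exact hyz.symm
      · rw [Finset.mem_singleton] at hz
        subst hz
        rw [← hyz, ← h]
    have h1 : ((a, b) : G × G) = p := by
      apply hup
      exact ⟨Finset.mem_singleton_self a, by simp, by rw [hc₀']⟩
    have h2 : ((a, c) : G × G) = p := by
      apply hup
      exact ⟨Finset.mem_singleton_self a, by simp, by rw [hc₀', ← h]⟩
    have := h1.trans h2.symm
    exact (Prod.ext_iff.mp this).2

lemma OrderedLike.isCancelAdd (hG : OrderedLike G) : IsCancelAdd G := by
  have hl : ∀ a b c : G, a + b = a + c → b = c := hG.cancel_s4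
  haveI : IsLeftCancelAdd G := ⟨hl⟩
  haveI : IsRightCancelAdd G := ⟨fun a b c h => hl a b c (by rw [add_comm a b, add_comm a c]; exact h)⟩
  exact {}

lemma OrderedLike.uniqueSums (hG : OrderedLike G) : UniqueSums G := by
  constructor
  intro A B hA hB
  by_cases hS : A + B = ({0} : Finset G)
  · -- every element of A and B is 0
    have key : ∀ x ∈ A, ∀ y ∈ B, x = 0 ∧ y = 0 := by
      intro x hx y hy
      have : x + y ∈ A + B := Finset.add_mem_add hx hy
      rw [hS, Finset.mem_singleton] at this
      exact ⟨hG.1 _ _ this, hG.1 y x (by rwa [add_comm] at this)⟩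
    obtain ⟨x, hx⟩ := hA
    obtain ⟨y, hy⟩ := hB
    refine ⟨x, hx, y, hy, ?_⟩
    intro x' y' hx' hy' _
    have h1 := key x hx y hy
    have h2 := key x' hx' y' hy'
    exact ⟨h2.1.trans h1.1.symm, h2.2.trans h1.2.symm⟩
  · obtain ⟨c, hc, p, hp, hup⟩ := hG.2 A B hA hB hS
    obtain ⟨hp1, hp2, hp3⟩ := hp
    refine ⟨p.1, hp1, p.2, hp2, ?_⟩
    intro x y hx hy hxy
    have : ((x, y) : G × G) = p := hup (x, y) ⟨hx, hy, by rw [hxy, hp3]⟩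
    exact ⟨(Prod.ext_iff.mp this).1, (Prod.ext_iff.mp this).2⟩

lemma OrderedLike.twoUniqueSums (hG : OrderedLike G) : TwoUniqueSums G := by
  letI : IsCancelAdd G := hG.isCancelAdd
  letI : UniqueSums G := hG.uniqueSums
  letI : UniqueSums (GK G) := GK.uniqueSums
  haveI : TwoUniqueSums (GK G) := UniqueSums.toTwoUniqueSums_of_addGroup
  exact TwoUniqueSums.of_injective_addHom GK.of GK.of_injective this

end OrderedLikeAux

/-- If `G` is an ordered-like additive semigroup and
`A = ⊕_{σ∈G} A_σ` is a `G`-graded ring which is a graded domain (the product of two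
nonzero homogeneous elements is nonzero), then `A₀ = 𝒜 0` is a strongly completely
prime subring of `A`: for nonzero `a b : A` with `a * b ∈ 𝒜 0` we have `a ∈ 𝒜 0`
and `b ∈ 𝒜 0`. -/
theorem gradeZero_stronglyCompletelyPrime_of_orderedLike
    {G : Type*} [AddCommMonoid G] [DecidableEq G] (hG : OrderedLike G)
    {A : Type*} [Ring A] (𝒜 : G → AddSubgroup A) [GradedRing 𝒜]
    (hdom : ∀ (i j : G) (a b : A), a ∈ 𝒜 i → b ∈ 𝒜 j → a ≠ 0 → b ≠ 0 → a * b ≠ 0)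
    (a b : A) (ha : a ≠ 0) (hb : b ≠ 0) (hab : a * b ∈ 𝒜 0) :
    a ∈ 𝒜 0 ∧ b ∈ 𝒜 0 := by
  classical
  haveI : TwoUniqueSums G := hG.twoUniqueSums
  set S₁ := DFinsupp.support (DirectSum.decompose 𝒜 a) with hS₁def
  set S₂ := DFinsupp.support (DirectSum.decompose 𝒜 b) with hS₂def
  have hS₁ne : S₁.Nonempty := by
    rw [Finset.nonempty_iff_ne_empty]
    intro h
    apply ha
    have h0 : DirectSum.decompose 𝒜 a = DirectSum.decompose 𝒜 0 := by
      rw [DirectSum.decompose_zero]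
      exact DFinsupp.support_eq_empty.mp h
    exact (DirectSum.decompose 𝒜).injective h0
  have hS₂ne : S₂.Nonempty := by
    rw [Finset.nonempty_iff_ne_empty]
    intro h
    apply hb
    have h0 : DirectSum.decompose 𝒜 b = DirectSum.decompose 𝒜 0 := by
      rw [DirectSum.decompose_zero]
      exact DFinsupp.support_eq_empty.mp h
    exact (DirectSum.decompose 𝒜).injective h0
  set aC : G → A := fun i => ((DirectSum.decompose 𝒜 a) i : A) with haCdef
  set bC : G → A := fun j => ((DirectSum.decompose 𝒜 b) j : A) with hbCdef
  have haC : ∀ i, aC i ∈ 𝒜 i := fun i => SetLike.coe_mem _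
  have hbC : ∀ j, bC j ∈ 𝒜 j := fun j => SetLike.coe_mem _
  have haCne : ∀ i ∈ S₁, aC i ≠ 0 := by
    intro i hi
    have := DFinsupp.mem_support_iff.mp hi
    simpa [haCdef, ZeroMemClass.coe_eq_zero] using this
  have hbCne : ∀ j ∈ S₂, bC j ≠ 0 := by
    intro j hj
    have := DFinsupp.mem_support_iff.mp hj
    simpa [hbCdef, ZeroMemClass.coe_eq_zero] using this
  have hasum : ∑ i ∈ S₁, aC i = a := DirectSum.sum_support_decompose 𝒜 a
  have hbsum : ∑ j ∈ S₂, bC j = b := DirectSum.sum_support_decompose 𝒜 b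
  have habc : a * b = ∑ p ∈ S₁ ×ˢ S₂, aC p.1 * bC p.2 := by
    rw [← hasum, ← hbsum, Finset.sum_mul_sum, ← Finset.sum_product']
  have key : ∀ c : G, ((DirectSum.decompose 𝒜 (a * b)) c : A) =
      ∑ p ∈ S₁ ×ˢ S₂, ((DirectSum.decompose 𝒜 (aC p.1 * bC p.2)) c : A) := by
    intro c
    rw [habc, DirectSum.decompose_sum, DFinsupp.finset_sum_apply,
      AddSubmonoidClass.coe_finset_sum]
  by_cases hcard : S₁.card = 1 ∧ S₂.card = 1
  · obtain ⟨i₀, hi₀⟩ := Finset.card_eq_one.mp hcard.1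
    obtain ⟨j₀, hj₀⟩ := Finset.card_eq_one.mp hcard.2
    have haA : a ∈ 𝒜 i₀ := by
      have h1 : a = aC i₀ := by rw [← hasum, hi₀, Finset.sum_singleton]
      rw [h1]; exact haC i₀
    have hbB : b ∈ 𝒜 j₀ := by
      have h1 : b = bC j₀ := by rw [← hbsum, hj₀, Finset.sum_singleton]
      rw [h1]; exact hbC j₀
    have hab0 : a * b ≠ 0 := hdom i₀ j₀ a b haA hbB ha hb
    have hij : i₀ + j₀ = 0 := by
      by_contra hne
      have h1 : ((DirectSum.decompose 𝒜 (a * b)) (i₀ + j₀) : A) = a * b :=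
        DirectSum.decompose_of_mem_same 𝒜 (SetLike.mul_mem_graded haA hbB)
      have h2 : ((DirectSum.decompose 𝒜 (a * b)) (i₀ + j₀) : A) = 0 :=
        DirectSum.decompose_of_mem_ne 𝒜 hab (Ne.symm hne)
      exact hab0 (h1.symm.trans h2)
    have hi0 : i₀ = 0 := hG.1 _ _ hij
    have hj0 : j₀ = 0 := hG.1 _ _ (by rwa [add_comm] at hij)
    exact ⟨hi0 ▸ haA, hj0 ▸ hbB⟩
  · exfalso
    have h1lt : 1 < S₁.card * S₂.card := by
      have c1 : 0 < S₁.card := Finset.card_pos.mpr hS₁ne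
      have c2 : 0 < S₂.card := Finset.card_pos.mpr hS₂ne
      refine Nat.one_lt_mul_iff.mpr ⟨c1, c2, ?_⟩
      rcases not_and_or.mp hcard with h | h
      · exact Or.inl (by omega)
      · exact Or.inr (by omega)
    obtain ⟨p₁, hp₁, p₂, hp₂, hne, hu₁, hu₂⟩ :=
      TwoUniqueSums.uniqueAdd_of_one_lt_card h1lt
    have hsums : p₁.1 + p₁.2 ≠ p₂.1 + p₂.2 := by
      intro h
      apply hne
      have hp₂' := Finset.mem_product.mp hp₂
      have h2 := hu₁ hp₂'.1 hp₂'.2 h.symm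
      exact (Prod.ext h2.1 h2.2).symm
    obtain ⟨p, hp, hu, hcne⟩ :
        ∃ p : G × G, p ∈ S₁ ×ˢ S₂ ∧ UniqueAdd S₁ S₂ p.1 p.2 ∧ p.1 + p.2 ≠ 0 := by
      by_cases h : p₁.1 + p₁.2 = 0
      · exact ⟨p₂, hp₂, hu₂, fun h2 => hsums (h.trans h2.symm)⟩
      · exact ⟨p₁, hp₁, hu₁, h⟩
    have hpmem := Finset.mem_product.mp hp
    have hzero : ((DirectSum.decompose 𝒜 (a * b)) (p.1 + p.2) : A) = 0 :=
      DirectSum.decompose_of_mem_ne 𝒜 hab (Ne.symm hcne)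
    rw [key (p.1 + p.2), Finset.sum_eq_single_of_mem p hp ?_] at hzero
    · rw [DirectSum.decompose_of_mem_same 𝒜
        (SetLike.mul_mem_graded (haC p.1) (hbC p.2))] at hzero
      exact hdom _ _ _ _ (haC p.1) (hbC p.2) (haCne _ hpmem.1) (hbCne _ hpmem.2) hzero
    · intro q hq hqne
      have hqmem := Finset.mem_product.mp hq
      by_cases hqc : q.1 + q.2 = p.1 + p.2
      · exact absurd (Prod.ext (hu hqmem.1 hqmem.2 hqc).1 (hu hqmem.1 hqmem.2 hqc).2) hqne
      · exact DirectSum.decompose_of_mem_ne 𝒜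
          (SetLike.mul_mem_graded (haC q.1) (hbC q.2)) hqc
end
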